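/- arXiv:2307.05303 — 7 statements merged into one kernel-verified Lean document; each statement's English description precedes it below -/
import Mathlib

section
/- For each positive integer m, the finite sequence γ with γ_r = ((-1)^{r+1}/r) · C(2m, m+r)/C(2m, m-1) for 1 ≤ r ≤ m and γ_r = 0 for r > m satisfies the vanishing conditions ∑_{r≥1} r^{2p+1} γ_r = 0 for all p = 1, …, m−1. -/
open Finset Polynomial fwdDiff

lemma fwdDiff_iter_poly_eq_zero (n : ℕ) (P : ℝ[X]) (hP : P.natDegree < n) :
    (fwdDiff 1)^[n] (fun k : ℕ ↦ P.eval (k : ℝ)) = 0 := by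
  induction n generalizing P with
  | zero => omega
  | succ n IH =>
    have hstep : fwdDiff 1 (fun k : ℕ ↦ P.eval (k : ℝ))
        = fun k : ℕ ↦ (P.comp (X + C 1) - P).eval (k : ℝ) := by
      funext k
      simp only [fwdDiff, eval_sub, eval_comp, eval_add, eval_X, eval_C]
      push_cast
      ring
    rw [Function.iterate_succ_apply, hstep]
    rcases Nat.eq_zero_or_pos P.natDegree with h0 | h0
    · obtain ⟨c, rfl⟩ := natDegree_eq_zero.mp h0
      simp only [C_comp, sub_self, eval_zero]
      exact Function.iterate_fixed (by funext k; simp [fwdDiff]) n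
    · apply IH
      have hP0 : P ≠ 0 := fun h ↦ by simp [h] at h0
      have h3 : (P.comp (X + C 1)).leadingCoeff = P.leadingCoeff := by
        rw [leadingCoeff_comp (by rw [natDegree_X_add_C]; exact one_ne_zero),
          leadingCoeff_X_add_C, one_pow, mul_one]
      have hc0 : P.comp (X + C 1) ≠ 0 := by
        intro h
        rw [h, leadingCoeff_zero] at h3
        exact hP0 (leadingCoeff_eq_zero.mp h3.symm)
      have h1 : (P.comp (X + C 1)).degree = P.degree := by
        rw [degree_eq_natDegree hc0, degree_eq_natDegree hP0,
          natDegree_comp, natDegree_X_add_C, mul_one]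
      have h4 := degree_sub_lt h1 hc0 h3
      rw [h1] at h4
      rcases eq_or_ne (P.comp (X + C 1) - P) 0 with hz | hz
      · rw [hz, natDegree_zero]; omega
      · have := natDegree_lt_natDegree hz h4
        omega

lemma sign_aux (m k : ℕ) (hk : k ≤ 2*m) : (-1:ℝ)^(2*m-k) = (-1:ℝ)^k := by
  have h : (2*m-k) + 2*k = 2*m + k := by omega
  calc (-1:ℝ)^(2*m-k) = (-1:ℝ)^(2*m-k) * ((-1:ℝ)^2)^k := by norm_num
    _ = (-1:ℝ)^((2*m-k)+2*k) := by rw [← pow_mul, ← pow_add]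
    _ = ((-1:ℝ)^2)^m * (-1:ℝ)^k := by rw [h, pow_add, pow_mul]
    _ = (-1:ℝ)^k := by norm_num

/-- The coefficients of the order-`m` minimal multicritical Schur measure
satisfy the multicriticality vanishing conditions
`∑_{r≥1} r^{2p+1} γ_r = 0` for `p = 1, …, m−1`. -/
theorem stmt1 (m : ℕ) (hm : 0 < m) (γ : ℕ → ℝ)
    (hγ : ∀ r, 1 ≤ r → r ≤ m →
      γ r = (-1 : ℝ) ^ (r + 1) / r *
        ((Nat.choose (2 * m) (m + r) : ℝ) / (Nat.choose (2 * m) (m - 1) : ℝ)))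
    (hγ0 : ∀ r, m < r → γ r = 0) :
    ∀ p, 1 ≤ p → p ≤ m - 1 →
      ∑ r ∈ Icc 1 m, (r : ℝ) ^ (2 * p + 1) * γ r = 0 := by
  intro p hp1 hpm
  set g : ℕ → ℝ := fun k ↦ (-1:ℝ)^k * ((2*m).choose k : ℝ) * ((k:ℝ) - m)^(2*p) with hg
  have hT : ∑ k ∈ range (2*m+1), g k = 0 := by
    have hkey := congrFun (fwdDiff_iter_poly_eq_zero (2*m) ((X - C (m:ℝ))^(2*p))
      (by rw [natDegree_pow, natDegree_X_sub_C, mul_one]; omega)) 0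
    rw [fwdDiff_iter_eq_sum_shift, Pi.zero_apply] at hkey
    rw [← hkey]
    refine Finset.sum_congr rfl fun k hk ↦ ?_
    rw [mem_range] at hk
    have hsign := sign_aux m k (by omega)
    simp only [zsmul_eq_mul, Int.cast_mul, Int.cast_pow, Int.cast_neg, Int.cast_one,
      Int.cast_natCast, eval_pow, eval_sub, eval_X, eval_C, zero_add, smul_eq_mul, mul_one, hg]
    rw [hsign]
  have hrefl : ∀ k, k ≤ 2*m → g (2*m - k) = g k := by
    intro k hk
    have hcast : ((2*m - k : ℕ) : ℝ) - m = -((k:ℝ) - m) := by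
      rw [Nat.cast_sub hk]; push_cast; ring
    simp only [hg]
    rw [Nat.choose_symm hk, sign_aux m k hk, hcast, Even.neg_pow (even_two_mul p)]
  have hU : ∑ j ∈ range m, g (m + 1 + j) = 0 := by
    have h1 : ∑ k ∈ range (2*m+1), g k
        = ∑ k ∈ range (m+1), g k + ∑ k ∈ Ico (m+1) (2*m+1), g k := by
      rw [range_eq_Ico,
        ← Finset.sum_Ico_consecutive g (by omega : 0 ≤ m+1) (by omega : m+1 ≤ 2*m+1),
        ← range_eq_Ico]
    have h3 : g m = 0 := by
      simp only [hg, sub_self, zero_pow (by omega : 2*p ≠ 0), mul_zero]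
    have h4 : ∑ k ∈ range m, g k = ∑ j ∈ range m, g (m+1+j) := by
      rw [← sum_range_reflect]
      refine Finset.sum_congr rfl fun j hj ↦ ?_
      rw [mem_range] at hj
      have := hrefl (m - 1 - j) (by omega)
      rw [show 2*m - (m - 1 - j) = m+1+j from by omega] at this
      exact this.symm
    have h5 : ∑ k ∈ Ico (m+1) (2*m+1), g k = ∑ j ∈ range m, g (m+1+j) := by
      rw [sum_Ico_eq_sum_range, show 2*m+1 - (m+1) = m from by omega]
    rw [h1, sum_range_succ, h3, h4, h5] at hT
    linarith
  have hCm1 : (0:ℝ) < ((2*m).choose (m-1) : ℝ) := by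
    exact_mod_cast Nat.choose_pos (by omega)
  have hterm : ∀ r ∈ Icc 1 m, (r:ℝ)^(2*p+1) * γ r
      = ((-1:ℝ)^(m+1) / ((2*m).choose (m-1) : ℝ)) * g (m + r) := by
    intro r hr
    rw [mem_Icc] at hr
    rw [hγ r hr.1 hr.2]
    have hr0 : (r:ℝ) ≠ 0 := Nat.cast_ne_zero.mpr (by omega)
    have hcast : ((m + r : ℕ):ℝ) - m = r := by push_cast; ring
    simp only [hg, hcast]
    have hsgn : (-1:ℝ)^(m+1) * (-1:ℝ)^(m+r) = (-1:ℝ)^(r+1) := by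
      rw [← pow_add, show m+1+(m+r) = 2*m+(r+1) from by omega, pow_add, pow_mul]
      norm_num
    rw [pow_succ, ← hsgn]
    field_simp
  rw [Finset.sum_congr rfl hterm, ← Finset.mul_sum]
  have : ∑ r ∈ Icc 1 m, g (m + r) = ∑ j ∈ range m, g (m+1+j) := by
    rw [show Icc 1 m = Ico 1 (m+1) from (Finset.Ico_add_one_right_eq_Icc 1 m).symm,
      sum_Ico_eq_sum_range, show m+1-1 = m from rfl]
    exact Finset.sum_congr rfl fun j _ ↦ by rw [← add_assoc]
  rw [this, hU, mul_zero]
end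

section
/- Let m be a positive integer and define γ_r = ((-1)^{r+1}/r) · C(2m, m+r)/C(2m, m-1) for 1 ≤ r ≤ m, γ_r = 0 otherwise. Then for all real z > 0, ∑_{r=1}^{m} r γ_r (z^r + z^{-r}) − (m+1)/m = (−1)^{m+1} C(2m, m-1)^{-1} (z^{1/2} − z^{-1/2})^{2m}. -/
open Finset

lemma sum_center {M : Type*} [AddCommMonoid M] (m : ℕ) (f : ℕ → M) :
    ∑ k ∈ range (2*m+1), f k
      = f m + ∑ r ∈ Icc 1 m, (f (m - r) + f (m + r)) := by
  have h1 : 2*m+1 = m + (m+1) := by ring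
  rw [h1, sum_range_add, sum_range_succ']
  rw [← sum_range_reflect f m]
  have h2 : ∑ r ∈ Icc 1 m, (f (m - r) + f (m + r))
      = ∑ i ∈ range m, (f (m - (1 + i)) + f (m + (1 + i))) := by
    rw [← Finset.Ico_add_one_right_eq_Icc, sum_Ico_eq_sum_range]
    simp
  rw [h2, sum_add_distrib]
  have h3 : ∀ i ∈ range m, f (m - 1 - i) = f (m - (1 + i)) := by
    intro i _; congr 1; omega
  have h4 : ∀ i ∈ range m, f (m + (i + 1)) = f (m + (1 + i)) := by
    intro i _; congr 1; omega
  rw [sum_congr rfl h3, sum_congr rfl h4]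
  simp only [add_zero]
  abel

lemma neg_one_pow_add_two_mul (a b : ℕ) : ((-1:ℝ)) ^ (a + 2*b) = (-1) ^ a := by
  rw [pow_add, pow_mul]
  norm_num

/-- Closed form for the logarithmic derivative of the action of the order-`m`
minimal multicritical Schur measure at the right edge `b = (m+1)/m`:
`∑_{r=1}^m r γ_r (z^r + z^{-r}) − (m+1)/m
  = (−1)^{m+1} C(2m, m−1)⁻¹ (z^{1/2} − z^{−1/2})^{2m}` for all `z > 0`. -/
theorem stmt2 (m : ℕ) (hm : 0 < m) (γ : ℕ → ℝ)
    (hγ : ∀ r, 1 ≤ r → r ≤ m →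
      γ r = (-1 : ℝ) ^ (r + 1) / r *
        ((Nat.choose (2 * m) (m + r) : ℝ) / (Nat.choose (2 * m) (m - 1) : ℝ)))
    (hγ0 : ∀ r, m < r → γ r = 0) :
    ∀ z : ℝ, 0 < z →
      (∑ r ∈ Icc 1 m, (r : ℝ) * γ r * (z ^ (r : ℤ) + z ^ (-(r : ℤ))))
          - ((m : ℝ) + 1) / m
        = (-1 : ℝ) ^ (m + 1) * ((Nat.choose (2 * m) (m - 1) : ℝ))⁻¹ *
            (Real.sqrt z - (Real.sqrt z)⁻¹) ^ (2 * m) := by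
  intro z hz
  have hz0 : z ≠ 0 := ne_of_gt hz
  set C : ℝ := (Nat.choose (2*m) (m-1) : ℝ) with hCdef
  have hCpos : (0:ℝ) < C := by
    rw [hCdef]; exact_mod_cast Nat.choose_pos (by omega)
  have hC : C ≠ 0 := ne_of_gt hCpos
  have hs : 0 < Real.sqrt z := Real.sqrt_pos.2 hz
  have hs0 : Real.sqrt z ≠ 0 := ne_of_gt hs
  have hsq : Real.sqrt z * Real.sqrt z = z := Real.mul_self_sqrt hz.le
  -- step 1
  have key1 : (Real.sqrt z - (Real.sqrt z)⁻¹) ^ (2*m) = (z-1)^(2*m) * (z^m)⁻¹ := by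
    have h : Real.sqrt z - (Real.sqrt z)⁻¹ = (z - 1) / Real.sqrt z := by
      field_simp
      rw [sq, hsq]
    have hpow : Real.sqrt z ^ (2*m) = z ^ m := by
      rw [pow_mul, sq, hsq]
    rw [h, div_pow, hpow, div_eq_mul_inv]
  set f : ℕ → ℝ := fun k => (-1)^(m+1+k) * (Nat.choose (2*m) k : ℝ) * z ^ ((k:ℤ) - m)
    with hf
  -- step 2
  have key2 : (-1:ℝ)^(m+1) * C⁻¹ * (Real.sqrt z - (Real.sqrt z)⁻¹) ^ (2*m)
      = C⁻¹ * ∑ k ∈ range (2*m+1), f k := by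
    rw [key1, sub_pow, sum_mul, mul_sum, mul_sum]
    apply sum_congr rfl
    intro k hk
    rw [mem_range] at hk
    have hsign : (-1:ℝ)^(m+1) * (-1)^(k + 2*m) = (-1)^(m+1+k) := by
      rw [neg_one_pow_add_two_mul k m, ← pow_add]
    have hzp : z ^ ((k:ℤ) - m) = z ^ k * (z ^ m)⁻¹ := by
      rw [zpow_sub₀ hz0, zpow_natCast, zpow_natCast, div_eq_mul_inv]
    rw [hf]
    simp only [one_pow, mul_one]
    rw [hzp, neg_one_pow_add_two_mul k m, show m+1+k = (m+1)+k from rfl, pow_add]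
    ring
  -- step 3: split the f-sum
  have key3 : ∑ k ∈ range (2*m+1), f k
      = -(Nat.choose (2*m) m : ℝ)
        + ∑ r ∈ Icc 1 m,
            (-1:ℝ)^(r+1) * (Nat.choose (2*m) (m+r) : ℝ) * (z ^ (r:ℤ) + z ^ (-(r:ℤ))) := by
    rw [sum_center]
    congr 1
    · rw [hf]
      simp only [sub_self, zpow_zero, mul_one]
      have : m + 1 + m = 1 + 2*m := by ring
      rw [this, neg_one_pow_add_two_mul 1 m]
      ring
    · apply sum_congr rfl
      intro r hr
      rw [mem_Icc] at hr
      obtain ⟨hr1, hrm⟩ := hr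
      have hchoose : (Nat.choose (2*m) (m - r) : ℝ) = (Nat.choose (2*m) (m+r) : ℝ) := by
        have : m - r = 2*m - (m + r) := by omega
        rw [this, Nat.choose_symm (by omega)]
      have hsub : (((m - r : ℕ)):ℤ) - m = -(r:ℤ) := by
        have : ((m - r : ℕ) : ℤ) = (m:ℤ) - r := by
          exact_mod_cast Int.ofNat_sub hrm
        omega
      have hadd : (((m + r : ℕ)):ℤ) - m = (r:ℤ) := by push_cast; omega
      have hsign1 : (-1:ℝ)^(m+1+(m-r)) = (-1)^(r+1) := by
        have h1 : m+1+(m-r) + 2*r = (r+1) + 2*m := by omega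
        calc (-1:ℝ)^(m+1+(m-r)) = (-1)^(m+1+(m-r)+2*r) := by
              rw [neg_one_pow_add_two_mul]
          _ = (-1)^(r+1) := by rw [h1, neg_one_pow_add_two_mul]
      have hsign2 : (-1:ℝ)^(m+1+(m+r)) = (-1)^(r+1) := by
        have h1 : m+1+(m+r) = (r+1) + 2*m := by omega
        rw [h1, neg_one_pow_add_two_mul]
      rw [hf]
      simp only
      rw [hchoose, hsub, hadd, hsign1, hsign2]
      ring
  -- step 4: ratio identity
  have key4 : ((m:ℝ)+1)/m = (Nat.choose (2*m) m : ℝ) / C := by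
    have hn : Nat.choose (2*m) m * m = Nat.choose (2*m) (m-1) * (m+1) := by
      have h := Nat.choose_succ_right_eq (2*m) (m-1)
      have h1 : m - 1 + 1 = m := by omega
      have h2 : 2*m - (m-1) = m + 1 := by omega
      rw [h1, h2] at h
      exact h
    have hm0 : (m:ℝ) ≠ 0 := Nat.cast_ne_zero.2 (by omega)
    have hn' : ((2*m).choose m : ℝ) * m = C * ((m:ℝ)+1) := by
      rw [hCdef]; exact_mod_cast hn
    rw [div_eq_div_iff hm0 hC]
    linear_combination -hn'
  -- step 5: rewrite the γ-sum
  have key5 : ∑ r ∈ Icc 1 m, (r : ℝ) * γ r * (z ^ (r : ℤ) + z ^ (-(r : ℤ)))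
      = C⁻¹ * ∑ r ∈ Icc 1 m,
          (-1:ℝ)^(r+1) * (Nat.choose (2*m) (m+r) : ℝ) * (z ^ (r:ℤ) + z ^ (-(r:ℤ))) := by
    rw [mul_sum]
    apply sum_congr rfl
    intro r hr
    rw [mem_Icc] at hr
    obtain ⟨hr1, hrm⟩ := hr
    rw [hγ r hr1 hrm]
    have hr0 : (r:ℝ) ≠ 0 := Nat.cast_ne_zero.2 (by omega)
    field_simp
  rw [key2, key3, key5, key4]
  field_simp
  ring
end

section
/- Let m be a positive integer and γ_r as in the minimal multicritical measure: γ_r = ((-1)^{r+1}/r) C(2m, m+r)/C(2m, m-1) for 1 ≤ r ≤ m, γ_r = 0 otherwise. Then 2∑_{r≥1} r γ_r = (m+1)/m. -/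
open Finset

lemma natkey (m : ℕ) (hm : 0 < m) :
    2 * m * Nat.choose (2 * m - 1) m = (m + 1) * Nat.choose (2 * m) (m - 1) := by
  have h1 : Nat.choose (2 * m - 1) (m - 1) = Nat.choose (2 * m - 1) m := by
    rw [← Nat.choose_symm (by omega : m ≤ 2 * m - 1)]
    congr 1
    omega
  have h2 := Nat.add_one_mul_choose_eq (2 * m - 1) (m - 1)
  have h3 := Nat.choose_succ_right_eq (2 * m) (m - 1)
  have e1 : 2 * m - 1 + 1 = 2 * m := by omega
  have e2 : m - 1 + 1 = m := by omega
  rw [e1, e2] at h2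
  rw [e2] at h3
  have e3 : 2 * m - (m - 1) = m + 1 := by omega
  rw [e3] at h3
  calc 2 * m * Nat.choose (2 * m - 1) m
      = 2 * m * Nat.choose (2 * m - 1) (m - 1) := by rw [h1]
    _ = Nat.choose (2 * m) m * m := h2
    _ = (m + 1) * Nat.choose (2 * m) (m - 1) := by rw [h3]; ring

/-- The right edge coefficient of the order-`m` minimal multicritical Schur
measure: `b = 2 ∑_{r≥1} r γ_r = (m+1)/m`. -/
theorem stmt3 (m : ℕ) (hm : 0 < m) (γ : ℕ → ℝ)
    (hγ : ∀ r, 1 ≤ r → r ≤ m →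
      γ r = (-1 : ℝ) ^ (r + 1) / r *
        ((Nat.choose (2 * m) (m + r) : ℝ) / (Nat.choose (2 * m) (m - 1) : ℝ)))
    (hγ0 : ∀ r, m < r → γ r = 0) :
    2 * ∑ r ∈ Icc 1 m, (r : ℝ) * γ r = ((m : ℝ) + 1) / m := by
  set D : ℝ := (Nat.choose (2 * m) (m - 1) : ℝ) with hDdef
  have hD : D ≠ 0 := by
    have : 0 < Nat.choose (2 * m) (m - 1) := Nat.choose_pos (by omega)
    positivity
  set g : ℕ → ℝ := fun i => (-1 : ℝ) ^ i * (Nat.choose (2 * m - 1) (m + i) : ℝ)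
    with hgdef
  have hterm : ∀ i ∈ range m,
      ((1 + i : ℕ) : ℝ) * γ (1 + i) = (g i - g (i + 1)) / D := by
    intro i hi
    rw [mem_range] at hi
    rw [hγ (1 + i) (by omega) (by omega)]
    have hpascal : Nat.choose (2 * m) (m + (1 + i))
        = Nat.choose (2 * m - 1) (m + i) + Nat.choose (2 * m - 1) (m + i + 1) := by
      have e1 : 2 * m = (2 * m - 1) + 1 := by omega
      have e2 : m + (1 + i) = (m + i) + 1 := by omega
      rw [e1, e2, Nat.choose_succ_succ]
      simp
    rw [hpascal]
    have hne : ((1 + i : ℕ) : ℝ) ≠ 0 := by positivity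
    simp only [hgdef]
    push_cast
    field_simp
    ring
  have hsum : ∑ r ∈ Icc 1 m, (r : ℝ) * γ r
      = ∑ i ∈ range m, (g i - g (i + 1)) / D := by
    rw [← Finset.Ico_add_one_right_eq_Icc, Finset.sum_Ico_eq_sum_range]
    exact Finset.sum_congr rfl hterm
  rw [hsum, ← Finset.sum_div, Finset.sum_range_sub' g]
  have hg0 : g 0 = (Nat.choose (2 * m - 1) m : ℝ) := by simp [hgdef]
  have hgm : g m = 0 := by
    have : Nat.choose (2 * m - 1) (m + m) = 0 :=
      Nat.choose_eq_zero_of_lt (by omega)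
    simp only [hgdef]
    rw [this]
    simp
  rw [hg0, hgm, sub_zero]
  have hkey := natkey m hm
  have hkeyR : (2 : ℝ) * m * (Nat.choose (2 * m - 1) m : ℝ)
      = ((m : ℝ) + 1) * D := by
    rw [hDdef]
    exact_mod_cast congrArg (Nat.cast : ℕ → ℝ) hkey
  have hmR : (m : ℝ) ≠ 0 := by positivity
  field_simp
  linarith [hkeyR]
end

section
/- For the order-m minimal multicritical measure coefficients γ_r, the function D(φ) = ∑_{r≥1} 2 r γ_r cos(rφ) satisfies D(φ) − (m+1)/m = −4^m C(2m, m−1)^{−1} sin^{2m}(φ/2) for all real φ; in particular D is non-increasing on [0, π]. -/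
open Finset Real

private lemma neg_one_pow_sub' (n k : ℕ) (h : k ≤ 2*n) :
    ((-1 : ℂ))^(2*n - k) = (-1)^k := by
  have h1 : ((-1 : ℂ))^(2*n - k) * (-1)^k = 1 := by
    rw [← pow_add, Nat.sub_add_cancel h, pow_mul]; norm_num
  have h2 : ((-1 : ℂ))^k * (-1)^k = 1 := by
    rw [← pow_add, ← two_mul, pow_mul]; norm_num
  calc ((-1 : ℂ))^(2*n - k) = ((-1:ℂ))^(2*n-k) * ((-1)^k * (-1)^k) := by rw [h2, mul_one]
    _ = (((-1:ℂ))^(2*n-k) * (-1)^k) * (-1)^k := by ring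
    _ = (-1)^k := by rw [h1, one_mul]

private lemma sum_split' (m : ℕ) (f : ℕ → ℂ) :
    ∑ k ∈ range (2*m+1), f k = f m + ∑ r ∈ Icc 1 m, (f (m+r) + f (m-r)) := by
  have h1 : ∑ k ∈ range (2*m+1), f k
      = (∑ k ∈ range m, f k) + ∑ k ∈ range (m+1), f (m + k) := by
    rw [← Finset.sum_range_add]; congr 1; ring
  have h2 : ∑ r ∈ Icc 1 m, f (m+r) = ∑ k ∈ range m, f (m+(k+1)) := by
    rw [show Icc 1 m = Ico 1 (m+1) by rfl, Finset.sum_Ico_eq_sum_range]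
    simp [add_comm 1, add_assoc, add_comm]
  have h3 : ∑ r ∈ Icc 1 m, f (m-r) = ∑ k ∈ range m, f k := by
    rw [show Icc 1 m = Ico 1 (m+1) by rfl, Finset.sum_Ico_eq_sum_range,
      ← Finset.sum_range_reflect (fun k => f k) m]
    simp [Nat.sub_sub, add_comm]
  rw [Finset.sum_add_distrib, h2, h3, h1, Finset.sum_range_succ' (fun k => f (m+k)) m]
  simp [add_comm, add_assoc, add_left_comm]

private lemma binom_sum' (m : ℕ) (z : ℂ) (hz : z ≠ 0) :
    (2 - z - z⁻¹)^m
      = ∑ k ∈ range (2*m+1), (Nat.choose (2*m) k : ℂ) * (-1)^(k+m) * z^((k:ℤ) - m) := by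
  have h1 : 2 - z - z⁻¹ = -((z - 1)^2 * z⁻¹) := by field_simp; ring
  have h2 : (z + (-1))^(2*m)
      = ∑ k ∈ range (2*m+1), z^k * (-1)^(2*m - k) * (Nat.choose (2*m) k : ℂ) :=
    add_pow z (-1 : ℂ) (2*m)
  have h3 : ((z - 1)^2)^m = (z - 1)^(2*m) := by rw [← pow_mul, mul_comm]
  rw [h1, neg_pow, mul_pow, h3, show z - 1 = z + (-1) by ring, h2, Finset.sum_mul,
    Finset.mul_sum]
  refine Finset.sum_congr rfl fun k hk => ?_
  have hk' : k ≤ 2*m := Nat.lt_succ_iff.mp (Finset.mem_range.mp hk)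
  have hsgn : ((-1 : ℂ))^(2*m - k) = (-1)^k := neg_one_pow_sub' m k hk'
  have hzpow : z^k * (z⁻¹)^m = z^((k:ℤ) - m) := by
    rw [← zpow_natCast z k, ← zpow_natCast z⁻¹ m, inv_zpow, ← zpow_neg, ← zpow_add₀ hz,
      sub_eq_add_neg]
  rw [hsgn]
  calc (-1:ℂ) ^ m * (z ^ k * (-1) ^ k * ↑((2*m).choose k) * (z⁻¹) ^ m)
      = ↑((2*m).choose k) * ((-1)^k * (-1)^m) * (z^k * (z⁻¹)^m) := by ring
    _ = _ := by rw [← pow_add, hzpow]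

private lemma key_ident (m : ℕ) (φ : ℝ) :
    (2 - 2 * Real.cos φ)^m
      = (Nat.choose (2*m) m : ℝ)
        + ∑ r ∈ Icc 1 m, 2 * (-1:ℝ)^r * (Nat.choose (2*m) (m+r) : ℝ) * Real.cos (r*φ) := by
  set z := Complex.exp (↑φ * Complex.I) with hzdef
  have hz : z ≠ 0 := Complex.exp_ne_zero _
  have h := binom_sum' m z hz
  have hzc : 2 - z - z⁻¹ = ((2 - 2*Real.cos φ : ℝ) : ℂ) := by
    rw [hzdef, ← Complex.exp_neg]
    rw [show -(↑φ * Complex.I) = ↑(-φ) * Complex.I by push_cast; ring,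
      Complex.exp_mul_I, Complex.exp_mul_I]
    push_cast
    rw [Complex.cos_neg, Complex.sin_neg]
    ring
  rw [hzc, sum_split'] at h
  have hmid : (Nat.choose (2*m) m : ℂ) * (-1)^(m+m) * z^((m:ℤ) - m)
      = ((Nat.choose (2*m) m : ℝ) : ℂ) := by
    rw [sub_self, zpow_zero, ← two_mul, pow_mul]
    push_cast
    norm_num
  have hpair : ∀ r ∈ Icc 1 m,
      ((Nat.choose (2*m) (m+r) : ℂ) * (-1)^(m+r+m) * z^(((m+r:ℕ):ℤ) - m)
        + (Nat.choose (2*m) (m-r) : ℂ) * (-1)^(m-r+m) * z^(((m-r:ℕ):ℤ) - m))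
      = ((2 * (-1:ℝ)^r * (Nat.choose (2*m) (m+r) : ℝ) * Real.cos (r*φ) : ℝ) : ℂ) := by
    intro r hr
    obtain ⟨hr1, hr2⟩ := Finset.mem_Icc.mp hr
    have hc : ((2*m).choose (m-r) : ℂ) = ((2*m).choose (m+r) : ℂ) := by
      rw [show m - r = 2*m - (m+r) by omega]
      rw [Nat.choose_symm (by omega)]
    have hs1 : ((-1:ℂ))^(m+r+m) = (-1)^r := by
      rw [show m+r+m = 2*m + r by ring, pow_add, pow_mul]; norm_num
    have hs2 : ((-1:ℂ))^(m-r+m) = (-1)^r := by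
      rw [show m-r+m = 2*m - r by omega]
      exact neg_one_pow_sub' m r (by omega)
    have he1 : ((m+r:ℕ):ℤ) - m = (r:ℤ) := by push_cast; ring
    have he2 : ((m-r:ℕ):ℤ) - m = -(r:ℤ) := by
      rw [Nat.cast_sub hr2]; push_cast; ring
    have hcos : z^((r:ℤ)) + z^(-(r:ℤ)) = ((2 * Real.cos (r*φ) : ℝ) : ℂ) := by
      rw [hzdef, ← Complex.exp_int_mul, ← Complex.exp_int_mul]
      push_cast
      rw [show (r:ℂ) * (↑φ * Complex.I) = (↑r * ↑φ) * Complex.I by ring,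
        show -(r:ℂ) * (↑φ * Complex.I) = (-((r:ℂ) * ↑φ)) * Complex.I by ring,
        Complex.exp_mul_I, Complex.exp_mul_I, Complex.cos_neg, Complex.sin_neg]
      ring
    rw [he1, he2, hc, hs1, hs2]
    push_cast
    calc ((2*m).choose (m+r) : ℂ) * (-1)^r * z^(r:ℤ)
          + ((2*m).choose (m+r) : ℂ) * (-1)^r * z^(-(r:ℤ))
        = ((2*m).choose (m+r) : ℂ) * (-1)^r * (z^(r:ℤ) + z^(-(r:ℤ))) := by ring
      _ = _ := by rw [hcos]; push_cast; ring
  rw [Finset.sum_congr rfl hpair, hmid] at h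
  have : (((2 - 2*Real.cos φ)^m : ℝ) : ℂ)
      = (((Nat.choose (2*m) m : ℝ)
        + ∑ r ∈ Icc 1 m, 2 * (-1:ℝ)^r * (Nat.choose (2*m) (m+r) : ℝ) * Real.cos (r*φ) : ℝ) : ℂ) := by
    push_cast
    push_cast at h
    rw [← h]
  exact_mod_cast this

/-- For the order-`m` minimal multicritical coefficients, the function
`D(φ) = ∑_{r≥1} 2 r γ_r cos(rφ)` satisfies
`D(φ) − (m+1)/m = −4^m C(2m, m−1)⁻¹ sin^{2m}(φ/2)` for all real `φ`;
in particular `D` is non-increasing on `[0, π]`. -/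
theorem stmt5 (m : ℕ) (hm : 0 < m) (γ : ℕ → ℝ)
    (hγ : ∀ r, 1 ≤ r → r ≤ m →
      γ r = (-1 : ℝ) ^ (r + 1) / r *
        ((Nat.choose (2 * m) (m + r) : ℝ) / (Nat.choose (2 * m) (m - 1) : ℝ)))
    (hγ0 : ∀ r, m < r → γ r = 0) :
    (∀ φ : ℝ,
      (∑ r ∈ Icc 1 m, 2 * (r : ℝ) * γ r * Real.cos (r * φ)) - ((m : ℝ) + 1) / m
        = -(4 : ℝ) ^ m * ((Nat.choose (2 * m) (m - 1) : ℝ))⁻¹ *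
            (Real.sin (φ / 2)) ^ (2 * m)) ∧
    AntitoneOn (fun φ : ℝ => ∑ r ∈ Icc 1 m, 2 * (r : ℝ) * γ r * Real.cos (r * φ))
      (Set.Icc 0 π) := by
  have hC : (0:ℝ) < (Nat.choose (2*m) (m-1) : ℝ) := by
    exact_mod_cast Nat.choose_pos (by omega)
  have hCne : ((Nat.choose (2*m) (m-1) : ℝ)) ≠ 0 := ne_of_gt hC
  have hmne : (m:ℝ) ≠ 0 := Nat.cast_ne_zero.mpr hm.ne'
  have hrel : ((Nat.choose (2*m) m : ℝ)) * m = (Nat.choose (2*m) (m-1) : ℝ) * ((m:ℝ)+1) := by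
    have h := Nat.choose_succ_right_eq (2*m) (m-1)
    rw [show m - 1 + 1 = m by omega, show 2*m - (m-1) = m+1 by omega] at h
    exact_mod_cast h
  have hmain : ∀ φ : ℝ,
      (∑ r ∈ Icc 1 m, 2 * (r : ℝ) * γ r * Real.cos (r * φ)) - ((m : ℝ) + 1) / m
        = -(4 : ℝ) ^ m * ((Nat.choose (2 * m) (m - 1) : ℝ))⁻¹ *
            (Real.sin (φ / 2)) ^ (2 * m) := by
    intro φ
    have hsum : (∑ r ∈ Icc 1 m, 2 * (r : ℝ) * γ r * Real.cos (r * φ))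
        = -((Nat.choose (2*m) (m-1) : ℝ))⁻¹ *
            ∑ r ∈ Icc 1 m, 2 * (-1:ℝ)^r * (Nat.choose (2*m) (m+r) : ℝ) * Real.cos (r*φ) := by
      rw [Finset.mul_sum]
      refine Finset.sum_congr rfl fun r hr => ?_
      obtain ⟨hr1, hr2⟩ := Finset.mem_Icc.mp hr
      have hrne : (r:ℝ) ≠ 0 := Nat.cast_ne_zero.mpr (by omega)
      rw [hγ r hr1 hr2, pow_succ]
      field_simp
    have h4 : (2 - 2*Real.cos φ) = 4 * Real.sin (φ/2)^2 := by
      have h := Real.cos_two_mul (φ/2)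
      rw [show 2*(φ/2) = φ by ring] at h
      rw [h, Real.cos_sq']
      ring
    have hkey := key_ident m φ
    rw [h4, mul_pow, ← pow_mul, show (4:ℝ)^m = 4^m by rfl] at hkey
    -- hkey : 4^m * sin(φ/2)^(2m) = choose(2m,m) + ∑ ...
    have hSsum : ∑ r ∈ Icc 1 m, 2 * (-1:ℝ)^r * (Nat.choose (2*m) (m+r) : ℝ) * Real.cos (r*φ)
        = (4:ℝ)^m * Real.sin (φ/2)^(2*m) - (Nat.choose (2*m) m : ℝ) := by
      linarith [hkey]
    rw [hsum, hSsum]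
    have hdiv : ((m:ℝ)+1)/m = (Nat.choose (2*m) m : ℝ) / (Nat.choose (2*m) (m-1) : ℝ) := by
      rw [div_eq_div_iff hmne hC.ne']
      linarith [hrel]
    rw [hdiv]
    field_simp
    ring
  refine ⟨hmain, ?_⟩
  intro a ha b hb hab
  simp only [Set.mem_Icc] at ha hb
  have hfa := hmain a
  have hfb := hmain b
  have hsinab : Real.sin (a/2) ≤ Real.sin (b/2) :=
    Real.sin_le_sin_of_le_of_le_pi_div_two (by linarith [Real.pi_pos, ha.1])
      (by linarith [hb.2]) (by linarith)
  have hsa : 0 ≤ Real.sin (a/2) :=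
    Real.sin_nonneg_of_nonneg_of_le_pi (by linarith [ha.1]) (by linarith [ha.2, Real.pi_pos])
  have hpow : Real.sin (a/2)^(2*m) ≤ Real.sin (b/2)^(2*m) :=
    pow_le_pow_left₀ hsa hsinab (2*m)
  have hcoef : (0:ℝ) ≤ (4:ℝ)^m * ((Nat.choose (2*m) (m-1) : ℝ))⁻¹ := by positivity
  simp only
  nlinarith [hfa, hfb, mul_le_mul_of_nonneg_left hpow hcoef]
end

section
/- For the order-m symmetric minimal multicritical coefficients (γ_{2r−1} = ((−1)^{r+1}/(2r−1)^2) C(2m−1, m−r)/C(2m−1, m−1) for 1 ≤ r ≤ m, all other γ_r = 0), the derivative of D(φ) = ∑_{r≥1} 2 r γ_r cos(rφ) satisfies D'(φ) = −(4^m/2) C(2m−1, m−1)^{−1} sin^{2m−1}(φ), which is ≤ 0 for φ ∈ [0, π]. -/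
open Finset Real Complex

lemma complex_main (m : ℕ) (hm : 0 < m) (φ : ℝ) :
    (∑ k ∈ range (2*m), (((-1:ℝ)^(k+1) * (Nat.choose (2*m-1) k : ℝ)) : ℂ) *
        Complex.exp (((((k:ℝ) - ((2*m-1-k:ℕ):ℝ)) * φ : ℝ)) * I))
      = (((2:ℝ)^(2*m-1) * (-1:ℝ)^(m+1) * Real.sin φ ^ (2*m-1) : ℝ) : ℂ) * I := by
  set z : ℂ := Complex.exp (φ * I) with hzdef
  have hzinv : z⁻¹ = Complex.exp (-(φ * I)) := by rw [hzdef, ← Complex.exp_neg]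
  have hz : z - z⁻¹ = 2 * I * (Real.sin φ : ℂ) := by
    rw [hzdef, hzinv, Complex.ofReal_sin, Complex.sin]
    have : (I:ℂ) * I = -1 := Complex.I_mul_I
    field_simp
    ring_nf
    rw [Complex.I_sq]
    ring
  have key := sub_pow z z⁻¹ (2*m-1)
  rw [show (2*m-1)+1 = 2*m by omega] at key
  rw [hz] at key
  have hterm : ∀ k ∈ range (2*m),
      (-1:ℂ)^(k+(2*m-1)) * z^k * (z⁻¹)^(2*m-1-k) * ((2*m-1).choose k : ℂ)
      = (((-1:ℝ)^(k+1) * (Nat.choose (2*m-1) k : ℝ)) : ℂ) *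
        Complex.exp (((((k:ℝ) - ((2*m-1-k:ℕ):ℝ)) * φ : ℝ)) * I) := by
    intro k hk
    rw [mem_range] at hk
    have h1 : z ^ k = Complex.exp ((k:ℂ) * (φ * I)) := by
      rw [Complex.exp_nat_mul]
    have h2 : (z⁻¹) ^ (2*m-1-k) = Complex.exp (((2*m-1-k:ℕ):ℂ) * (-(φ * I))) := by
      rw [hzinv, Complex.exp_nat_mul]
    have hsgn : (-1:ℂ)^(k+(2*m-1)) = (-1:ℂ)^(k+1) := by
      rw [show k+(2*m-1) = (k+1) + 2*(m-1) by omega, pow_add, pow_mul]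
      simp
    have harg : ((((k:ℝ) - ((2*m-1-k:ℕ):ℝ)) * φ : ℝ) : ℂ) * I
        = (k:ℂ) * (↑φ * I) + ((2*m-1-k:ℕ):ℂ) * -(↑φ * I) := by
      push_cast
      ring
    rw [h1, h2, hsgn, harg, Complex.exp_add]
    push_cast
    ring
  rw [Finset.sum_congr rfl hterm] at key
  rw [← key]
  have hI : (I:ℂ)^(2*m-1) = ((-1:ℝ)^(m+1) : ℂ) * I := by
    rw [show 2*m-1 = 2*(m-1)+1 by omega, pow_succ, pow_mul, Complex.I_sq]
    push_cast
    rw [show m+1 = (m-1)+2 by omega, pow_add]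
    ring
  rw [mul_pow, mul_pow, hI]
  push_cast
  ring

lemma real_main (m : ℕ) (hm : 0 < m) (φ : ℝ) :
    ∑ k ∈ range (2*m), (-1:ℝ)^(k+1) * (Nat.choose (2*m-1) k : ℝ) *
        Real.sin (((k:ℝ) - ((2*m-1-k:ℕ):ℝ)) * φ)
      = 2^(2*m-1) * (-1:ℝ)^(m+1) * Real.sin φ ^ (2*m-1) := by
  have h := congrArg Complex.im (complex_main m hm φ)
  simp only [← Complex.ofReal_pow, ← Complex.ofReal_mul, ← Complex.ofReal_natCast,
    Complex.im_sum, Complex.im_ofReal_mul, Complex.exp_ofReal_mul_I_im,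
    Complex.mul_I_im, Complex.ofReal_re] at h
  convert h using 2 <;> push_cast <;> ring

lemma negpow (a b : ℕ) (h : a % 2 = b % 2) : (-1:ℝ)^a = (-1)^b := by
  rcases Nat.even_or_odd a with ha | ha
  · have ha' := Nat.even_iff.mp ha
    rw [ha.neg_one_pow, (Nat.even_iff.mpr (by omega : b % 2 = 0)).neg_one_pow]
  · have ha' := Nat.odd_iff.mp ha
    rw [ha.neg_one_pow, (Nat.odd_iff.mpr (by omega : b % 2 = 1)).neg_one_pow]

lemma key (m : ℕ) (hm : 0 < m) (φ : ℝ) :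
    ∑ r ∈ Icc 1 m, (-1:ℝ)^(r+1) * (Nat.choose (2*m-1) (m-r) : ℝ) *
        Real.sin (((2*r-1:ℕ):ℝ) * φ)
      = 4^(m-1) * Real.sin φ ^ (2*m-1) := by
  set f : ℕ → ℝ := fun k => (-1:ℝ)^(k+1) * (Nat.choose (2*m-1) k : ℝ) *
      Real.sin (((k:ℝ) - ((2*m-1-k:ℕ):ℝ)) * φ) with hf
  have hmain : ∑ k ∈ range (2*m), f k
      = 2^(2*m-1) * (-1:ℝ)^(m+1) * Real.sin φ ^ (2*m-1) := real_main m hm φ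
  have hpair : ∀ j ∈ range m, f (m + j) = f (m - 1 - j) := by
    intro j hj
    rw [mem_range] at hj
    have hA : 2*m-1-(m+j) = m-1-j := by omega
    have hB : 2*m-1-(m-1-j) = m+j := by omega
    have hC : Nat.choose (2*m-1) (m+j) = Nat.choose (2*m-1) (m-1-j) := by
      rw [← hA]
      exact (Nat.choose_symm (by omega)).symm
    have hcast : ((m-1-j:ℕ):ℝ) = (m:ℝ) - 1 - (j:ℝ) := by
      rw [show m-1-j = m-(1+j) by omega, Nat.cast_sub (by omega)]
      push_cast
      ring
    simp only [hf, hA, hB, hC]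
    rw [show (-1:ℝ)^(m-1-j+1) = (-1)^(m+j) from negpow _ _ (by omega),
      show (-1:ℝ)^(m+j+1) = -(-1)^(m+j) from by rw [pow_succ]; ring]
    push_cast [hcast]
    rw [show ((m:ℝ)-1-(j:ℝ) - ((m:ℝ)+(j:ℝ)))*φ = -((((m:ℝ)+(j:ℝ)) - ((m:ℝ)-1-(j:ℝ)))*φ) by ring,
      Real.sin_neg]
    ring
  have h2 : ∑ k ∈ range (2*m), f k = 2 * ∑ j ∈ range m, f (m-1-j) := by
    rw [show 2*m = m + m by ring, Finset.sum_range_add, Finset.sum_congr rfl hpair,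
      ← Finset.sum_range_reflect f m]
    ring
  have h3 : ∑ j ∈ range m, f (m-1-j)
      = (-1:ℝ)^(m+1) * 4^(m-1) * Real.sin φ ^ (2*m-1) := by
    have := h2.symm.trans hmain
    have h4 : (2:ℝ)^(2*m-1) = 2 * 4^(m-1) := by
      rw [show 2*m-1 = 2*(m-1)+1 by omega, pow_succ, pow_mul]
      norm_num
      ring
    rw [h4] at this
    linarith
  rw [← Finset.Ico_add_one_right_eq_Icc, Finset.sum_Ico_eq_sum_range]
  have hterm : ∀ i ∈ range m,
      (-1:ℝ)^((1+i)+1) * (Nat.choose (2*m-1) (m-(1+i)) : ℝ) *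
        Real.sin (((2*(1+i)-1:ℕ):ℝ) * φ)
      = (-1:ℝ)^(m+1) * f (m-1-i) := by
    intro i hi
    rw [mem_range] at hi
    have hB : 2*m-1-(m-1-i) = m+i := by omega
    have hD : m-(1+i) = m-1-i := by omega
    have hcast : ((m-1-i:ℕ):ℝ) = (m:ℝ) - 1 - (i:ℝ) := by
      rw [show m-1-i = m-(1+i) by omega, Nat.cast_sub (by omega)]
      push_cast
      ring
    have hE : ((2*(1+i)-1:ℕ):ℝ) = 2*(i:ℝ)+1 := by
      rw [show 2*(1+i)-1 = 2*i+1 by omega]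
      push_cast
      ring
    simp only [hf, hB, hD, hE]
    rw [show (-1:ℝ)^(m-1-i+1) = (-1)^(m+i) from negpow _ _ (by omega),
      show (-1:ℝ)^((1+i)+1) = (-1)^i from negpow _ _ (by omega)]
    push_cast [hcast]
    rw [show ((m:ℝ)-1-(i:ℝ) - ((m:ℝ)+(i:ℝ)))*φ = -((2*(i:ℝ)+1)*φ) by ring, Real.sin_neg]
    have hsq : (-1:ℝ)^(m+1) * (-1:ℝ)^(m+i) = (-1:ℝ)^(i+1) := by
      rw [← pow_add]
      exact negpow _ _ (by omega)
    linear_combination ((((2*m-1).choose (m-1-i) : ℕ) : ℝ) * Real.sin ((2*(i:ℝ)+1)*φ)) * hsq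
  simp only [Nat.add_sub_cancel]
  rw [Finset.sum_congr rfl hterm, ← Finset.mul_sum, h3, ← mul_assoc, ← mul_assoc, ← pow_add]
  rw [Even.neg_one_pow ⟨m+1, by ring⟩]
  ring


/-- For the order-`m` symmetric minimal multicritical coefficients, the
derivative of `D(φ) = ∑_{r≥1} 2 r γ_r cos(rφ)` satisfies
`D'(φ) = −(4^m/2) C(2m−1, m−1)⁻¹ sin^{2m−1}(φ)`, which is `≤ 0` on `[0, π]`. -/
theorem stmt6 (m : ℕ) (hm : 0 < m) (γ : ℕ → ℝ)
    (hγ : ∀ r, 1 ≤ r → r ≤ m →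
      γ (2 * r - 1) = (-1 : ℝ) ^ (r + 1) / ((2 * r - 1 : ℕ) : ℝ) ^ 2 *
        ((Nat.choose (2 * m - 1) (m - r) : ℝ) / (Nat.choose (2 * m - 1) (m - 1) : ℝ)))
    (hγ0 : ∀ s, (∀ r, 1 ≤ r → r ≤ m → s ≠ 2 * r - 1) → γ s = 0) :
    (∀ φ : ℝ,
      deriv (fun ψ : ℝ => ∑ r ∈ Icc 1 (2 * m), 2 * (r : ℝ) * γ r * Real.cos (r * ψ)) φ
        = -((4 : ℝ) ^ m / 2) * ((Nat.choose (2 * m - 1) (m - 1) : ℝ))⁻¹ *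
            (Real.sin φ) ^ (2 * m - 1)) ∧
    ∀ φ ∈ Set.Icc (0 : ℝ) π,
      deriv (fun ψ : ℝ => ∑ r ∈ Icc 1 (2 * m), 2 * (r : ℝ) * γ r * Real.cos (r * ψ)) φ ≤ 0 := by
  have hCne : ((Nat.choose (2*m-1) (m-1) : ℕ) : ℝ) ≠ 0 := by
    have := Nat.choose_pos (show m-1 ≤ 2*m-1 by omega)
    exact_mod_cast this.ne'
  have hD : ∀ φ : ℝ,
      deriv (fun ψ : ℝ => ∑ r ∈ Icc 1 (2 * m), 2 * (r : ℝ) * γ r * Real.cos (r * ψ)) φ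
        = -((4 : ℝ) ^ m / 2) * ((Nat.choose (2 * m - 1) (m - 1) : ℝ))⁻¹ *
            (Real.sin φ) ^ (2 * m - 1) := by
    intro φ
    have hA : ∀ r : ℕ, HasDerivAt (fun ψ : ℝ => 2 * (r:ℝ) * γ r * Real.cos ((r:ℝ) * ψ))
        (2 * (r:ℝ) * γ r * (-Real.sin ((r:ℝ)*φ) * (r:ℝ))) φ := by
      intro r
      simpa using (((hasDerivAt_id φ).const_mul (r:ℝ)).cos).const_mul (2*(r:ℝ)*γ r)
    rw [deriv_fun_sum (fun r _ => (hA r).differentiableAt),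
      Finset.sum_congr rfl (fun r _ => (hA r).deriv)]
    have hsub : (Icc 1 m).image (fun r => 2*r-1) ⊆ Icc 1 (2*m) := by
      intro x hx
      rw [mem_image] at hx
      obtain ⟨r, hr, rfl⟩ := hx
      rw [mem_Icc] at hr ⊢
      omega
    have hzero : ∀ x ∈ Icc 1 (2*m), x ∉ (Icc 1 m).image (fun r => 2*r-1) →
        2 * (x:ℝ) * γ x * (-Real.sin ((x:ℝ)*φ) * (x:ℝ)) = 0 := by
      intro x _ hxt
      have hx0 : γ x = 0 := by
        refine hγ0 x (fun r h1 h2 hne => hxt ?_)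
        rw [mem_image]
        exact ⟨r, mem_Icc.mpr ⟨h1, h2⟩, hne.symm⟩
      simp [hx0]
    rw [← Finset.sum_subset hsub hzero,
      Finset.sum_image (fun a ha b hb hab => by
        rw [mem_coe, mem_Icc] at ha hb; omega)]
    have hterm2 : ∀ r ∈ Icc 1 m,
        2 * ((2*r-1:ℕ):ℝ) * γ (2*r-1) * (-Real.sin (((2*r-1:ℕ):ℝ)*φ) * ((2*r-1:ℕ):ℝ))
        = (-2 / (Nat.choose (2*m-1) (m-1) : ℝ)) *
            ((-1:ℝ)^(r+1) * (Nat.choose (2*m-1) (m-r) : ℝ) * Real.sin (((2*r-1:ℕ):ℝ)*φ)) := by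
      intro r hr
      rw [mem_Icc] at hr
      rw [hγ r hr.1 hr.2]
      have hne : ((2*r-1:ℕ):ℝ) ≠ 0 := Nat.cast_ne_zero.mpr (by omega)
      field_simp
    rw [Finset.sum_congr rfl hterm2, ← Finset.mul_sum, key m hm φ,
      show (4:ℝ)^m = 4 * 4^(m-1) by rw [← pow_succ']; congr 1; omega]
    field_simp
    ring
  refine ⟨hD, fun φ hφ => ?_⟩
  rw [hD φ]
  have hs : 0 ≤ Real.sin φ := Real.sin_nonneg_of_nonneg_of_le_pi hφ.1 hφ.2
  have h1 : (0:ℝ) ≤ Real.sin φ ^ (2*m-1) := pow_nonneg hs _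
  have h3 : (0:ℝ) ≤ (4:ℝ)^m/2 * ((Nat.choose (2*m-1) (m-1) : ℕ):ℝ)⁻¹ *
      Real.sin φ ^ (2*m-1) := by positivity
  nlinarith [h3]
end

section
/- For real α ∈ (−π, π) with α ≠ π, the principal value integral ⨍_{−π}^{π} cos(β − π) cot((α − β)/2) dβ equals 2π sin(α − π). -/
open Real Filter

noncomputable def Gfun (α β : ℝ) : ℝ :=
  2*Real.cos α * Real.log (Real.sin ((α - β)/2))
    + Real.cos α * Real.cos (α - β) - Real.sin α * β + Real.sin α * Real.sin (α - β)

lemma hasDerivG (α x : ℝ) (hs : Real.sin ((α - x)/2) ≠ 0) :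
    HasDerivAt (Gfun α)
      (Real.cos (x - π) * (Real.cos ((α - x) / 2) / Real.sin ((α - x) / 2))) x := by
  have h0 : HasDerivAt (fun β : ℝ => (α - β)/2) (-(1:ℝ)/2) x := by
    simpa using ((hasDerivAt_id x).const_sub α).div_const 2
  have h1 : HasDerivAt (fun β : ℝ => α - β) (-1:ℝ) x := by
    simpa using (hasDerivAt_id x).const_sub α
  have hlog := (h0.sin.log hs).const_mul (2*Real.cos α)
  have hcos := h1.cos.const_mul (Real.cos α)
  have hsin := h1.sin.const_mul (Real.sin α)
  have hid := (hasDerivAt_id x).const_mul (Real.sin α)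
  have H := ((hlog.add hcos).sub hid).add hsin
  refine H.congr_deriv (Eq.symm ?_)
  have hxcos : Real.cos (x - π) = -(Real.cos α * Real.cos (α - x) + Real.sin α * Real.sin (α - x)) := by
    have h2 : Real.cos x = Real.cos (α - (α - x)) := by ring_nf
    rw [show x - π = -(π - x) by ring, Real.cos_neg, Real.cos_pi_sub, h2, Real.cos_sub]
  rw [hxcos, show α - x = 2 * ((α - x)/2) by ring, Real.cos_two_mul, Real.sin_two_mul]
  field_simp
  linear_combination (-2*Real.cos ((α-x)/2)*Real.cos α) * (Real.sin_sq_add_cos_sq ((α-x)/2))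

lemma integ (α a b : ℝ) (h : ∀ x ∈ Set.uIcc a b, Real.sin ((α - x)/2) ≠ 0) :
    IntervalIntegrable
      (fun β => Real.cos (β - π) * (Real.cos ((α - β)/2) / Real.sin ((α - β)/2)))
      MeasureTheory.volume a b := by
  apply ContinuousOn.intervalIntegrable
  apply ContinuousOn.mul
  · exact (Real.continuous_cos.comp (continuous_id.sub continuous_const)).continuousOn
  · exact ContinuousOn.div
      ((Real.continuous_cos.comp ((continuous_const.sub continuous_id).div_const 2)).continuousOn)
      ((Real.continuous_sin.comp ((continuous_const.sub continuous_id).div_const 2)).continuousOn)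
      h

/-- The principal value integral
`⨍_{−π}^{π} cos(β − π) cot((α − β)/2) dβ = 2π sin(α − π)` for `α ∈ (−π, π)`,
stated as the convergence of the symmetrically truncated integrals. -/
theorem stmt15 (α : ℝ) (hα1 : -π < α) (hα2 : α < π) :
    Tendsto
      (fun ε : ℝ =>
        (∫ β in (-π)..(α - ε),
            Real.cos (β - π) * (Real.cos ((α - β) / 2) / Real.sin ((α - β) / 2))) +
          ∫ β in (α + ε)..π,
            Real.cos (β - π) * (Real.cos ((α - β) / 2) / Real.sin ((α - β) / 2)))
      (nhdsWithin 0 (Set.Ioi 0))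
      (nhds (2 * π * Real.sin (α - π))) := by
  have hδ : 0 < min (π - α) (α + π) := lt_min (by linarith) (by linarith)
  have key : ∀ ε ∈ Set.Ioo (0:ℝ) (min (π - α) (α + π)),
      (∫ β in (-π)..(α - ε),
          Real.cos (β - π) * (Real.cos ((α - β) / 2) / Real.sin ((α - β) / 2))) +
        (∫ β in (α + ε)..π,
          Real.cos (β - π) * (Real.cos ((α - β) / 2) / Real.sin ((α - β) / 2)))
      = 2 * π * Real.sin (α - π) + 2 * Real.sin α * ε + 2 * Real.sin α * Real.sin ε := by
    intro ε hε
    obtain ⟨hε0, hεm⟩ := hε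
    have hεa : ε < α + π := lt_of_lt_of_le hεm (min_le_right _ _)
    have hεp : ε < π - α := lt_of_lt_of_le hεm (min_le_left _ _)
    have hs1 : ∀ x ∈ Set.uIcc (-π) (α - ε), Real.sin ((α - x)/2) ≠ 0 := by
      intro x hx
      rw [Set.uIcc_of_le (by linarith)] at hx
      obtain ⟨hx1, hx2⟩ := hx
      exact ne_of_gt (Real.sin_pos_of_pos_of_lt_pi (by linarith) (by linarith))
    have hs2 : ∀ x ∈ Set.uIcc (α + ε) π, Real.sin ((α - x)/2) ≠ 0 := by
      intro x hx
      rw [Set.uIcc_of_le (by linarith)] at hx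
      obtain ⟨hx1, hx2⟩ := hx
      rw [show (α - x)/2 = -((x - α)/2) by ring, Real.sin_neg]
      exact neg_ne_zero.mpr
        (ne_of_gt (Real.sin_pos_of_pos_of_lt_pi (by linarith) (by linarith)))
    have h1 := intervalIntegral.integral_eq_sub_of_hasDerivAt
      (f := Gfun α) (fun x hx => hasDerivG α x (hs1 x hx)) (integ α _ _ hs1)
    have h2 := intervalIntegral.integral_eq_sub_of_hasDerivAt
      (f := Gfun α) (fun x hx => hasDerivG α x (hs2 x hx)) (integ α _ _ hs2)
    rw [h1, h2]
    have e1 : α - (α - ε) = ε := by ring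
    have e2 : α - (α + ε) = -ε := by ring
    have e3 : α - -π = α + π := by ring
    simp only [Gfun, e1, e2, e3]
    have l1 : Real.log (Real.sin (-ε/2)) = Real.log (Real.sin (ε/2)) := by
      rw [show -ε/2 = -(ε/2) by ring, Real.sin_neg, Real.log_neg_eq_log]
    have l2 : Real.log (Real.sin ((α - π)/2)) = Real.log (Real.sin ((α + π)/2)) := by
      rw [show (α-π)/2 = -(π - (α+π)/2) by ring, Real.sin_neg, Real.sin_pi_sub,
        Real.log_neg_eq_log]
    rw [l1, l2]
    simp [Real.cos_sub, Real.sin_sub, Real.cos_neg, Real.sin_neg]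
    ring
  have hmem : Set.Ioo (0:ℝ) (min (π - α) (α + π)) ∈ nhdsWithin 0 (Set.Ioi 0) :=
    Ioo_mem_nhdsGT_of_mem ⟨le_refl 0, hδ⟩
  apply Tendsto.congr' (Filter.eventuallyEq_of_mem hmem fun ε hε => (key ε hε).symm)
  have hc : Continuous (fun ε : ℝ =>
      2 * π * Real.sin (α - π) + 2 * Real.sin α * ε + 2 * Real.sin α * Real.sin ε) := by
    continuity
  have := (hc.tendsto 0).mono_left (nhdsWithin_le_nhds (s := Set.Ioi 0))
  simpa using this
end

section
/- Let m be a positive integer and γ define an order-m multicritical Schur measure (i.e., ∑_r r^{2p+1} γ_r = 0 for p = 1,…,m−1, ∑_r r^{2m+1} γ_r ≠ 0, and ∑_r r² γ_r sin(rφ) ≥ 0 for φ ∈ [0,π]). Let b = 2∑_r r γ_r, d = (2(−1)^{m+1}/(2m)!) ∑_r r^{2m+1} γ_r, and ρ(x) = χ(x)/π where χ(x) ∈ [0,π] solves ∑_r 2r γ_r cos(r χ) = x. Then as x → b⁻, χ(x) ~ ((b − x)/d)^{1/(2m)}. -/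
open Finset Real Filter


lemma cos_taylor_bound (n : ℕ) (t : ℝ) (ht : |t| ≤ 1) :
    |Real.cos t - ∑ k ∈ range (n + 1), (-1 : ℝ) ^ k * t ^ (2 * k) / (Nat.factorial (2 * k) : ℝ)| ≤
      2 * |t| ^ (2 * n + 2) := by
  have hs := Real.hasSum_cos t
  have hsum : Summable fun k : ℕ => (-1 : ℝ) ^ k * t ^ (2 * k) / (Nat.factorial (2 * k) : ℝ) := hs.summable
  have key : Real.cos t - ∑ k ∈ range (n + 1), (-1 : ℝ) ^ k * t ^ (2 * k) / (Nat.factorial (2 * k) : ℝ)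
      = ∑' k : ℕ, (-1 : ℝ) ^ (k + (n + 1)) * t ^ (2 * (k + (n + 1))) / (Nat.factorial (2 * (k + (n + 1))) : ℝ) := by
    have h2 := Summable.sum_add_tsum_nat_add (f := fun k : ℕ => (-1 : ℝ) ^ k * t ^ (2 * k) / (Nat.factorial (2 * k) : ℝ)) (n + 1) hsum
    rw [hs.tsum_eq] at h2
    linarith
  rw [key]
  have hbd : ∀ k : ℕ,
      |(-1 : ℝ) ^ (k + (n + 1)) * t ^ (2 * (k + (n + 1))) / (Nat.factorial (2 * (k + (n + 1))) : ℝ)|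
      ≤ |t| ^ (2 * n + 2) * (1 / 2) ^ k := by
    intro k
    rw [abs_div, abs_mul, abs_pow, abs_pow, abs_neg, abs_one, one_pow, one_mul,
      abs_of_nonneg (by positivity : (0:ℝ) ≤ (Nat.factorial (2 * (k + (n + 1))) : ℝ))]
    have h1 : |t| ^ (2 * (k + (n + 1))) ≤ |t| ^ (2 * n + 2) := by
      have he : |t| ^ (2 * (k + (n + 1))) = |t| ^ (2 * n + 2) * |t| ^ (2 * k) := by ring
      rw [he]
      nlinarith [pow_le_one₀ (abs_nonneg t) ht (n := 2 * k), pow_nonneg (abs_nonneg t) (2 * n + 2),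
        pow_nonneg (abs_nonneg t) (2 * k)]
    have h2 : (2 : ℝ) ^ k ≤ (Nat.factorial (2 * (k + (n + 1))) : ℝ) := by
      have hk : 2 ^ k ≤ Nat.factorial (k + 1) := by
        have := @Nat.factorial_mul_pow_le_factorial 1 k
        simpa [Nat.factorial, add_comm] using this
      have hle : Nat.factorial (k + 1) ≤ Nat.factorial (2 * (k + (n + 1))) := Nat.factorial_le (by omega)
      exact_mod_cast le_trans hk hle
    calc |t| ^ (2 * (k + (n + 1))) / (Nat.factorial (2 * (k + (n + 1))) : ℝ)
        ≤ |t| ^ (2 * n + 2) / (2 : ℝ) ^ k :=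
          div_le_div₀ (by positivity) h1 (by positivity) h2
      _ = |t| ^ (2 * n + 2) * (1 / 2) ^ k := by rw [div_pow, one_pow]; ring
  have hgsum : Summable fun k : ℕ => |t| ^ (2 * n + 2) * (1 / 2 : ℝ) ^ k :=
    (summable_geometric_of_lt_one (by norm_num) (by norm_num)).mul_left _
  calc |∑' k : ℕ, (-1 : ℝ) ^ (k + (n + 1)) * t ^ (2 * (k + (n + 1))) / (Nat.factorial (2 * (k + (n + 1))) : ℝ)|
      ≤ ∑' k : ℕ, |t| ^ (2 * n + 2) * (1 / 2 : ℝ) ^ k := by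
        rw [← Real.norm_eq_abs]
        apply tsum_of_norm_bounded hgsum.hasSum
        intro k
        rw [Real.norm_eq_abs]
        exact hbd k
    _ = |t| ^ (2 * n + 2) * 2 := by
        rw [tsum_mul_left, tsum_geometric_of_lt_one (by norm_num) (by norm_num)]; norm_num
    _ = 2 * |t| ^ (2 * n + 2) := by ring


lemma key_est (m N : ℕ) (hm : 0 < m) (γ : ℕ → ℝ)
    (hvan : ∀ p, 1 ≤ p → p ≤ m - 1 →
      ∑ r ∈ Icc 1 N, (r : ℝ) ^ (2 * p + 1) * γ r = 0)
    (b d : ℝ)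
    (hb : b = 2 * ∑ r ∈ Icc 1 N, (r : ℝ) * γ r)
    (hd : d = 2 * (-1 : ℝ) ^ (m + 1) / (Nat.factorial (2 * m) : ℝ) *
      ∑ r ∈ Icc 1 N, (r : ℝ) ^ (2 * m + 1) * γ r)
    (φ : ℝ) (hφ0 : 0 ≤ φ) (hφ1 : (N : ℝ) * φ ≤ 1) :
    |(b - ∑ r ∈ Icc 1 N, 2 * (r : ℝ) * γ r * Real.cos (r * φ)) - d * φ ^ (2 * m)| ≤
      (∑ r ∈ Icc 1 N, 4 * (r : ℝ) ^ (2 * m + 3) * |γ r|) * φ ^ (2 * m + 2) := by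
  set T : ℕ → ℝ := fun r =>
    ∑ k ∈ range (m + 1), (-1 : ℝ) ^ k * ((r : ℝ) * φ) ^ (2 * k) / (Nat.factorial (2 * k) : ℝ)
    with hT
  have step2 : ∑ r ∈ Icc 1 N, 2 * (r : ℝ) * γ r * (1 - T r) = d * φ ^ (2 * m) := by
    have hTr : ∀ r : ℕ, 1 - T r
        = -∑ k ∈ range m, (-1 : ℝ) ^ (k + 1) * ((r : ℝ) * φ) ^ (2 * (k + 1)) /
            (Nat.factorial (2 * (k + 1)) : ℝ) := by
      intro r
      show 1 - ∑ k ∈ range (m + 1),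
          (-1 : ℝ) ^ k * ((r : ℝ) * φ) ^ (2 * k) / (Nat.factorial (2 * k) : ℝ) = _
      rw [Finset.sum_range_succ']
      simp [Nat.factorial]
    calc ∑ r ∈ Icc 1 N, 2 * (r : ℝ) * γ r * (1 - T r)
        = ∑ r ∈ Icc 1 N, ∑ k ∈ range m,
            -((-1 : ℝ) ^ (k + 1) / (Nat.factorial (2 * (k + 1)) : ℝ)) * φ ^ (2 * (k + 1)) *
              (2 * (r : ℝ) ^ (2 * (k + 1) + 1) * γ r) := by
          refine Finset.sum_congr rfl fun r _ => ?_
          rw [hTr r, mul_neg, Finset.mul_sum, ← Finset.sum_neg_distrib]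
          refine Finset.sum_congr rfl fun k _ => ?_
          ring
      _ = ∑ k ∈ range m,
            -((-1 : ℝ) ^ (k + 1) / (Nat.factorial (2 * (k + 1)) : ℝ)) * φ ^ (2 * (k + 1)) *
              (2 * ∑ r ∈ Icc 1 N, (r : ℝ) ^ (2 * (k + 1) + 1) * γ r) := by
          rw [Finset.sum_comm]
          refine Finset.sum_congr rfl fun k _ => ?_
          simp only [Finset.mul_sum]
          refine Finset.sum_congr rfl fun r _ => ?_
          ring
      _ = d * φ ^ (2 * m) := by
          rw [Finset.sum_eq_single_of_mem (m - 1) (Finset.mem_range.2 (by omega))]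
          · have hme : m - 1 + 1 = m := by omega
            rw [hme, hd]
            ring
          · intro k hk hkne
            rw [hvan (k + 1) (by omega) (by have hk' := Finset.mem_range.1 hk; omega : k + 1 ≤ m - 1)]
            ring
  have step1 : b - ∑ r ∈ Icc 1 N, 2 * (r : ℝ) * γ r * Real.cos ((r : ℝ) * φ)
      = ∑ r ∈ Icc 1 N, 2 * (r : ℝ) * γ r * (1 - Real.cos ((r : ℝ) * φ)) := by
    rw [hb, Finset.mul_sum, ← Finset.sum_sub_distrib]
    refine Finset.sum_congr rfl fun r _ => ?_
    ring
  have step3 : (b - ∑ r ∈ Icc 1 N, 2 * (r : ℝ) * γ r * Real.cos ((r : ℝ) * φ)) - d * φ ^ (2 * m)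
      = ∑ r ∈ Icc 1 N, 2 * (r : ℝ) * γ r * (T r - Real.cos ((r : ℝ) * φ)) := by
    rw [step1, ← step2, ← Finset.sum_sub_distrib]
    refine Finset.sum_congr rfl fun r _ => ?_
    ring
  rw [step3]
  calc |∑ r ∈ Icc 1 N, 2 * (r : ℝ) * γ r * (T r - Real.cos ((r : ℝ) * φ))|
      ≤ ∑ r ∈ Icc 1 N, |2 * (r : ℝ) * γ r * (T r - Real.cos ((r : ℝ) * φ))| :=
        Finset.abs_sum_le_sum_abs _ _
    _ ≤ ∑ r ∈ Icc 1 N, 4 * (r : ℝ) ^ (2 * m + 3) * |γ r| * φ ^ (2 * m + 2) := by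
        refine Finset.sum_le_sum fun r hr => ?_
        have hr1 : 1 ≤ r := (Finset.mem_Icc.1 hr).1
        have hrN : r ≤ N := (Finset.mem_Icc.1 hr).2
        have hrφ0 : 0 ≤ (r : ℝ) * φ := by positivity
        have hrφ1 : |(r : ℝ) * φ| ≤ 1 := by
          rw [abs_of_nonneg hrφ0]
          calc (r : ℝ) * φ ≤ (N : ℝ) * φ := by
                apply mul_le_mul_of_nonneg_right _ hφ0
                exact_mod_cast hrN
            _ ≤ 1 := hφ1
        have hcb := cos_taylor_bound m ((r : ℝ) * φ) hrφ1
        have hTc : |T r - Real.cos ((r : ℝ) * φ)| ≤ 2 * |(r : ℝ) * φ| ^ (2 * m + 2) := by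
          rw [abs_sub_comm]; exact hcb
        rw [abs_mul]
        have h2 : |2 * (r : ℝ) * γ r| = 2 * (r : ℝ) * |γ r| := by
          rw [abs_mul, abs_mul]
          simp [abs_of_nonneg (by positivity : (0:ℝ) ≤ (r:ℝ))]
        rw [h2]
        have hrφabs : |(r : ℝ) * φ| ^ (2 * m + 2) = (r : ℝ) ^ (2 * m + 2) * φ ^ (2 * m + 2) := by
          rw [abs_of_nonneg hrφ0, mul_pow]
        have hbd2 : |T r - Real.cos ((r : ℝ) * φ)|
            ≤ 2 * ((r : ℝ) ^ (2 * m + 2) * φ ^ (2 * m + 2)) := by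
          rw [← hrφabs]; exact hTc
        have hrpos : (0:ℝ) < (r : ℝ) := by exact_mod_cast hr1
        calc 2 * (r : ℝ) * |γ r| * |T r - Real.cos ((r : ℝ) * φ)|
            ≤ 2 * (r : ℝ) * |γ r| * (2 * ((r : ℝ) ^ (2 * m + 2) * φ ^ (2 * m + 2))) := by
              apply mul_le_mul_of_nonneg_left hbd2 (by positivity)
          _ = 4 * (r : ℝ) ^ (2 * m + 3) * |γ r| * φ ^ (2 * m + 2) := by ring
    _ = (∑ r ∈ Icc 1 N, 4 * (r : ℝ) ^ (2 * m + 3) * |γ r|) * φ ^ (2 * m + 2) := by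
        rw [Finset.sum_mul]


lemma D_anti (N : ℕ) (γ : ℕ → ℝ)
    (hpos : ∀ φ ∈ Set.Icc (0 : ℝ) π,
      0 ≤ ∑ r ∈ Icc 1 N, (r : ℝ) ^ 2 * γ r * Real.sin (r * φ)) :
    AntitoneOn (fun φ : ℝ => ∑ r ∈ Icc 1 N, 2 * (r : ℝ) * γ r * Real.cos (r * φ))
      (Set.Icc 0 π) := by
  have hder : ∀ φ : ℝ, HasDerivAt
      (fun φ : ℝ => ∑ r ∈ Icc 1 N, 2 * (r : ℝ) * γ r * Real.cos (r * φ))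
      (-(2 * ∑ r ∈ Icc 1 N, (r : ℝ) ^ 2 * γ r * Real.sin (r * φ))) φ := by
    intro φ
    have h1 : ∀ r ∈ Icc 1 N, HasDerivAt (fun φ : ℝ => 2 * (r : ℝ) * γ r * Real.cos (r * φ))
        (2 * (r : ℝ) * γ r * (-Real.sin ((r : ℝ) * φ) * ((r : ℝ) * 1))) φ := by
      intro r _
      exact (((hasDerivAt_id φ).const_mul (r : ℝ)).cos).const_mul (2 * (r : ℝ) * γ r)
    have h2 := HasDerivAt.fun_sum h1
    refine h2.congr_deriv ?_
    rw [Finset.mul_sum, ← Finset.sum_neg_distrib]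
    refine Finset.sum_congr rfl fun r _ => ?_
    ring
  apply antitoneOn_of_deriv_nonpos (convex_Icc 0 π)
  · exact (fun x _ => ((hder x).differentiableAt).continuousAt.continuousWithinAt)
  · exact fun x _ => ((hder x).differentiableAt).differentiableWithinAt
  · intro x hx
    rw [(hder x).deriv]
    have hx' : x ∈ Set.Icc (0:ℝ) π := by
      rw [interior_Icc] at hx
      exact Set.mem_Icc_of_Ioo hx
    have := hpos x hx'
    linarith


set_option maxHeartbeats 1000000 in
/-- Edge vanishing asymptotics for an order-`m` multicritical Schur measure:
if `χ(x) ∈ [0,π]` solves `∑_r 2 r γ_r cos(r χ(x)) = x` on `[−b̃, b)`, then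
`χ(x) ~ ((b − x)/d)^{1/(2m)}` as `x → b⁻`, i.e. the ratio tends to `1`. -/
theorem stmt16 (m N : ℕ) (hm : 0 < m) (γ : ℕ → ℝ)
    (hvan : ∀ p, 1 ≤ p → p ≤ m - 1 →
      ∑ r ∈ Icc 1 N, (r : ℝ) ^ (2 * p + 1) * γ r = 0)
    (hnz : ∑ r ∈ Icc 1 N, (r : ℝ) ^ (2 * m + 1) * γ r ≠ 0)
    (hpos : ∀ φ ∈ Set.Icc (0 : ℝ) π,
      0 ≤ ∑ r ∈ Icc 1 N, (r : ℝ) ^ 2 * γ r * Real.sin (r * φ))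
    (b d : ℝ)
    (hb : b = 2 * ∑ r ∈ Icc 1 N, (r : ℝ) * γ r)
    (hd : d = 2 * (-1 : ℝ) ^ (m + 1) / (Nat.factorial (2 * m) : ℝ) *
      ∑ r ∈ Icc 1 N, (r : ℝ) ^ (2 * m + 1) * γ r)
    (χ : ℝ → ℝ)
    (hχ : ∀ x ∈ Set.Ico (2 * ∑ r ∈ Icc 1 N, (-1 : ℝ) ^ r * r * γ r) b,
      χ x ∈ Set.Icc (0 : ℝ) π ∧
        ∑ r ∈ Icc 1 N, 2 * (r : ℝ) * γ r * Real.cos (r * χ x) = x) :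
    Tendsto (fun x : ℝ => χ x / ((b - x) / d) ^ (1 / (2 * (m : ℝ))))
      (nhdsWithin b (Set.Ico (2 * ∑ r ∈ Icc 1 N, (-1 : ℝ) ^ r * r * γ r) b))
      (nhds 1) := by
  set D : ℝ → ℝ := fun φ => ∑ r ∈ Icc 1 N, 2 * (r : ℝ) * γ r * Real.cos (r * φ) with hD
  set C : ℝ := ∑ r ∈ Icc 1 N, 4 * (r : ℝ) ^ (2 * m + 3) * |γ r| with hCdef
  set S : Set ℝ := Set.Ico (2 * ∑ r ∈ Icc 1 N, (-1 : ℝ) ^ r * r * γ r) b with hSdef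
  set l : Filter ℝ := nhdsWithin b S with hldef
  have hC0 : 0 ≤ C := Finset.sum_nonneg fun r _ => by positivity
  have hkey : ∀ φ : ℝ, 0 ≤ φ → (N : ℝ) * φ ≤ 1 →
      |(b - D φ) - d * φ ^ (2 * m)| ≤ C * φ ^ (2 * m + 2) := fun φ h1 h2 =>
    key_est m N hm γ hvan b d hb hd φ h1 h2
  have hanti : AntitoneOn D (Set.Icc 0 π) := D_anti N γ hpos
  have hD0 : D 0 = b := by
    rw [hD, hb, Finset.mul_sum]
    refine Finset.sum_congr rfl fun r _ => ?_
    rw [mul_zero, Real.cos_zero]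
    ring
  have hNa : (0:ℝ) < 1 / ((N : ℝ) + 1) := by positivity
  have hNle : ∀ φ : ℝ, φ ≤ 1 / ((N : ℝ) + 1) → 0 ≤ φ → (N : ℝ) * φ ≤ 1 := by
    intro φ h1 h2
    have hN0 : (0:ℝ) ≤ (N : ℝ) := Nat.cast_nonneg N
    calc (N : ℝ) * φ ≤ (N : ℝ) * (1 / ((N : ℝ) + 1)) := by
          apply mul_le_mul_of_nonneg_left h1 hN0
      _ ≤ 1 := by rw [mul_one_div, div_le_one (by positivity)]; linarith
  -- a := min π (1/(N+1))
  set a : ℝ := min π (1 / ((N : ℝ) + 1)) with hadef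
  have ha0 : 0 < a := lt_min Real.pi_pos hNa
  have hEnonneg : ∀ φ : ℝ, 0 ≤ φ → φ ≤ π → 0 ≤ b - D φ := by
    intro φ h1 h2
    have := hanti (Set.mem_Icc.2 ⟨le_refl 0, Real.pi_pos.le⟩) (Set.mem_Icc.2 ⟨h1, h2⟩) h1
    rw [hD0] at this
    linarith
  have hdne : d ≠ 0 := by
    rw [hd]
    apply mul_ne_zero _ hnz
    apply div_ne_zero
    · positivity
    · exact_mod_cast Nat.factorial_ne_zero (2 * m)
  have hd0 : 0 ≤ d := by
    have hseq : ∀ᶠ n : ℕ in atTop, -C * (a / (n : ℝ)) ^ 2 ≤ d := by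
      rw [eventually_atTop]
      refine ⟨1, fun n hn => ?_⟩
      have hn1 : (1:ℝ) ≤ (n : ℝ) := by exact_mod_cast hn
      set φ := a / (n : ℝ) with hφdef
      have hφpos : 0 < φ := div_pos ha0 (by linarith)
      have hφlea : φ ≤ a := by
        rw [hφdef, div_le_iff₀ (by linarith)]
        nlinarith
      have hφpi : φ ≤ π := le_trans hφlea (min_le_left _ _)
      have hφN : (N : ℝ) * φ ≤ 1 :=
        hNle φ (le_trans hφlea (min_le_right _ _)) hφpos.le
      have hk := hkey φ hφpos.le hφN
      have hE := hEnonneg φ hφpos.le hφpi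
      have h1 : d * φ ^ (2 * m) ≥ -(C * φ ^ (2 * m + 2)) := by
        have := abs_le.1 hk
        linarith
      have hφp : 0 < φ ^ (2 * m) := pow_pos hφpos _
      have h2 : φ ^ (2 * m + 2) = φ ^ (2 * m) * φ ^ 2 := by ring
      rw [h2] at h1
      nlinarith
    have htend : Tendsto (fun n : ℕ => -C * (a / (n : ℝ)) ^ 2) atTop (nhds 0) := by
      have h1 : Tendsto (fun n : ℕ => a / (n : ℝ)) atTop (nhds 0) :=
        tendsto_const_div_atTop_nhds_zero_nat a
      have h2 := (h1.pow 2).const_mul (-C)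
      simpa using h2
    exact le_of_tendsto htend hseq
  have hdpos : 0 < d := lt_of_le_of_ne hd0 (Ne.symm hdne)
  -- threshold ε₀
  set ε₀ : ℝ := min a (Real.sqrt (d / (C + 1))) with hε₀def
  have hε₀0 : 0 < ε₀ := lt_min ha0 (Real.sqrt_pos.2 (by positivity))
  have hEpos : ∀ ε : ℝ, 0 < ε → ε ≤ ε₀ → 0 < b - D ε := by
    intro ε hε1 hε2
    have hεa : ε ≤ a := le_trans hε2 (min_le_left _ _)
    have hεpi : ε ≤ π := le_trans hεa (min_le_left _ _)
    have hεN : (N : ℝ) * ε ≤ 1 := hNle ε (le_trans hεa (min_le_right _ _)) hε1.le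
    have hεsq : ε ^ 2 ≤ d / (C + 1) := by
      have h1 : ε ≤ Real.sqrt (d / (C + 1)) := le_trans hε2 (min_le_right _ _)
      have h2 : ε ^ 2 ≤ Real.sqrt (d / (C + 1)) ^ 2 := by nlinarith
      rwa [Real.sq_sqrt (by positivity : (0:ℝ) ≤ d / (C + 1))] at h2
    have hk := hkey ε hε1.le hεN
    have h1 : b - D ε ≥ d * ε ^ (2 * m) - C * ε ^ (2 * m + 2) := by
      have := abs_le.1 hk
      linarith
    have h2 : ε ^ (2 * m + 2) = ε ^ (2 * m) * ε ^ 2 := by ring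
    have hεp : 0 < ε ^ (2 * m) := pow_pos hε1 _
    have h3 : d - C * ε ^ 2 > 0 := by
      have : C * ε ^ 2 ≤ C * (d / (C + 1)) :=
        mul_le_mul_of_nonneg_left hεsq hC0
      have h4 : C * (d / (C + 1)) < d := by
        rw [mul_div_assoc']
        rw [div_lt_iff₀ (by positivity)]
        nlinarith
      linarith
    calc (0:ℝ) < ε ^ (2 * m) * (d - C * ε ^ 2) := by positivity
      _ = d * ε ^ (2 * m) - C * (ε ^ (2 * m) * ε ^ 2) := by ring
      _ = d * ε ^ (2 * m) - C * ε ^ (2 * m + 2) := by rw [← h2]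
      _ ≤ b - D ε := by linarith
  have hev : ∀ᶠ x in l, x ∈ S := self_mem_nhdsWithin
  have hbx : Tendsto (fun x : ℝ => b - x) l (nhds 0) := by
    have h1 : Tendsto (fun x : ℝ => x) l (nhds b) := tendsto_id.mono_left nhdsWithin_le_nhds
    have h2 := tendsto_const_nhds (x := b) (f := l)
    have := h2.sub h1
    simpa using this
  have hχ0 : Tendsto χ l (nhds 0) := by
    rw [tendsto_order]
    constructor
    · intro c hc
      filter_upwards [hev] with x hx
      have := (hχ x hx).1.1
      linarith
    · intro c hc
      set ε : ℝ := min c ε₀ with hεdef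
      have hε1 : 0 < ε := lt_min hc hε₀0
      have hε2 : ε ≤ ε₀ := min_le_right _ _
      have hDe := hEpos ε hε1 hε2
      filter_upwards [hev, hbx.eventually_lt_const hDe] with x hx hlt
      by_contra hcon
      push_neg at hcon
      have hεc : ε ≤ c := min_le_left _ _
      have hεχ : ε ≤ χ x := le_trans hεc hcon
      have hχI := (hχ x hx).1
      have hεI : ε ∈ Set.Icc (0:ℝ) π :=
        Set.mem_Icc.2 ⟨hε1.le, le_trans hεχ (Set.mem_Icc.1 hχI).2⟩
      have hmono := hanti hεI hχI hεχ
      have hDx : D (χ x) = x := (hχ x hx).2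
      rw [hDx] at hmono
      linarith
  have hχpos : ∀ᶠ x in l, 0 < χ x := by
    filter_upwards [hev] with x hx
    have h1 := (hχ x hx).1.1
    rcases lt_or_eq_of_le h1 with h | h
    · exact h
    · exfalso
      have hDx : D (χ x) = x := (hχ x hx).2
      rw [← h, hD0] at hDx
      have := hx.2
      rw [hSdef] at hx
      linarith [hx.2]
  have hχsm : ∀ᶠ x in l, χ x ≤ 1 / ((N : ℝ) + 1) := by
    have := hχ0.eventually_lt_const hNa
    filter_upwards [this] with x hx
    exact hx.le
  -- w tends to 1
  set w : ℝ → ℝ := fun x => (b - x) / d / (χ x) ^ (2 * m) with hwdef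
  have hwev : ∀ᶠ x in l, |w x - 1| ≤ C / d * (χ x) ^ 2 := by
    filter_upwards [hev, hχpos, hχsm] with x hx hp hsm
    have hDx : D (χ x) = x := (hχ x hx).2
    have hk := hkey (χ x) hp.le (hNle (χ x) hsm hp.le)
    rw [hDx] at hk
    have hχp : (0:ℝ) < (χ x) ^ (2 * m) := pow_pos hp _
    have hne1 : (χ x) ^ (2 * m) ≠ 0 := ne_of_gt hχp
    have hwexp : w x - 1 = ((b - x) - d * (χ x) ^ (2 * m)) / (d * (χ x) ^ (2 * m)) := by
      simp only [hwdef]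
      rw [div_div, div_sub' (by positivity : d * (χ x) ^ (2 * m) ≠ 0), mul_one]
    rw [hwexp, abs_div, abs_of_pos (by positivity : (0:ℝ) < d * (χ x) ^ (2 * m))]
    rw [div_le_iff₀ (by positivity : (0:ℝ) < d * (χ x) ^ (2 * m))]
    calc |(b - x) - d * (χ x) ^ (2 * m)| ≤ C * (χ x) ^ (2 * m + 2) := hk
      _ = C / d * (χ x) ^ 2 * (d * (χ x) ^ (2 * m)) := by
          have h5 : C / d * (χ x) ^ 2 * (d * (χ x) ^ (2 * m))
              = C * ((χ x) ^ 2 * (χ x) ^ (2 * m)) * (d / d) := by ring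
          rw [h5, div_self hdne, mul_one, ← pow_add]
          ring_nf
  have hw1 : Tendsto w l (nhds 1) := by
    have hg : Tendsto (fun x => C / d * (χ x) ^ 2) l (nhds 0) := by
      have := (hχ0.pow 2).const_mul (C / d)
      simpa using this
    have h0 : Tendsto (fun x => w x - 1) l (nhds 0) := by
      apply squeeze_zero_norm' _ hg
      filter_upwards [hwev] with x hx
      simpa [Real.norm_eq_abs] using hx
    have := h0.add_const 1
    simpa using this
  -- conclude
  set e : ℝ := 1 / (2 * (m : ℝ)) with hedef
  have hcomp : Tendsto (fun x => w x ^ (-e)) l (nhds 1) := by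
    have hc : ContinuousAt (fun t : ℝ => t ^ (-e)) 1 :=
      Real.continuousAt_rpow_const 1 (-e) (Or.inl one_ne_zero)
    have := hc.tendsto.comp hw1
    rwa [Real.one_rpow] at this
  apply Tendsto.congr' _ hcomp
  filter_upwards [hev, hχpos] with x hx hp
  have hDx : D (χ x) = x := (hχ x hx).2
  have hbxpos : 0 < b - x := by
    rw [hSdef] at hx
    linarith [hx.2]
  have hApos : 0 < (b - x) / d := div_pos hbxpos hdpos
  have hχp : (0:ℝ) < (χ x) ^ (2 * m) := pow_pos hp _
  have hwpos : 0 < w x := div_pos hApos hχp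
  have hsplit : (b - x) / d = (χ x) ^ (2 * m) * w x := by
    simp only [hwdef]
    rw [mul_div_assoc']
    rw [mul_comm, mul_div_assoc, div_self (ne_of_gt hχp), mul_one]
  have hpowχ : ((χ x) ^ (2 * m) : ℝ) ^ e = χ x := by
    rw [← Real.rpow_natCast (χ x) (2 * m), ← Real.rpow_mul hp.le]
    have : ((2 * m : ℕ) : ℝ) * e = 1 := by
      rw [hedef]
      push_cast
      field_simp
    rw [this, Real.rpow_one]
  have hre : ((b - x) / d) ^ e = χ x * w x ^ e := by
    rw [hsplit, Real.mul_rpow hχp.le hwpos.le, hpowχ]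
  show w x ^ (-e) = χ x / ((b - x) / d) ^ e
  rw [hre, Real.rpow_neg hwpos.le]
  exact (div_mul_cancel_left₀ (ne_of_gt hp) _).symm
end
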